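/- The map λ : S_n(123) → D_n, sending a 123-avoiding permutation to the Dyck path that translates each LTR minimum m_i (with m_0 := n+1) into m_{i-1} − m_i up steps and each maximal block w_i of non-minima following m_i into |w_i| + 1 down steps, is a bijection between 123-avoiding permutations of length n and Dyck paths of semilength n. -/

import Mathlib

/-- A Dyck word: `true` = up step, `false` = down step. -/
def IsDyckWord (p : List Bool) : Prop :=
  (∀ t, t <+: p → t.count false ≤ t.count true) ∧ p.count true = p.count false

/-- Successive differences of a list (with an implicit initial 0). -/
def diffs (l : List ℕ) : List ℕ := l.zipWith (· - ·) (0 :: l)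

/-- The Dyck path of semilength `n` with ascent-descent code `(A, D)`. -/
def pathOfCode (n : ℕ) (A D : List ℕ) : List Bool :=
  ((diffs (A ++ [n])).zip (diffs (D ++ [n]))).flatMap
    fun ad => List.replicate ad.1 true ++ List.replicate ad.2 false

def IsLTRMin {n : ℕ} (σ : Equiv.Perm (Fin n)) (i : Fin n) : Prop := ∀ j, j < i → σ i < σ j
def IsRTLMax {n : ℕ} (σ : Equiv.Perm (Fin n)) (i : Fin n) : Prop := ∀ j, i < j → σ j < σ i

instance {n : ℕ} (σ : Equiv.Perm (Fin n)) (i : Fin n) : Decidable (IsLTRMin σ i) := by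
  unfold IsLTRMin; infer_instance
instance {n : ℕ} (σ : Equiv.Perm (Fin n)) (i : Fin n) : Decidable (IsRTLMax σ i) := by
  unfold IsRTLMax; infer_instance

def pmin {n : ℕ} (σ : Equiv.Perm (Fin n)) : Set (Fin n) := {i | IsLTRMin σ i}
def vmin {n : ℕ} (σ : Equiv.Perm (Fin n)) : Set (Fin n) := σ '' pmin σ
def pmax {n : ℕ} (σ : Equiv.Perm (Fin n)) : Set (Fin n) := {i | IsRTLMax σ i}
def vmax {n : ℕ} (σ : Equiv.Perm (Fin n)) : Set (Fin n) := σ '' pmax σ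

/-- Reverse-complement of a permutation. -/
def rcPerm {n : ℕ} (σ : Equiv.Perm (Fin n)) : Equiv.Perm (Fin n) :=
  (Fin.revPerm.trans σ).trans Fin.revPerm

def Avoids123 {n : ℕ} (σ : Equiv.Perm (Fin n)) : Prop :=
  ¬ ∃ i j k : Fin n, i < j ∧ j < k ∧ σ i < σ j ∧ σ j < σ k

def Avoids1234 {n : ℕ} (σ : Equiv.Perm (Fin n)) : Prop :=
  ¬ ∃ i j k l : Fin n, i < j ∧ j < k ∧ k < l ∧ σ i < σ j ∧ σ j < σ k ∧ σ k < σ l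

/-- The value (1-based) of the previous LTR minimum before position `i` (`n+1` if none). -/
def prevMinVal {n : ℕ} (σ : Equiv.Perm (Fin n)) (i : Fin n) : ℕ :=
  ((((List.finRange n).filter fun j => decide (j < i)).map fun j => (σ j : ℕ) + 1)).foldr min (n + 1)

/-- The map λ: each LTR minimum m_i gives m_{i-1} - m_i up steps, each maximal
block of ℓ non-minima gives ℓ+1 down steps. -/
def lamWord {n : ℕ} (σ : Equiv.Perm (Fin n)) : List Bool :=
  ((List.finRange n).flatMap fun i =>
    if IsLTRMin σ i then
      (if (i : ℕ) = 0 then [] else [false]) ++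
        List.replicate (prevMinVal σ i - ((σ i : ℕ) + 1)) true
    else [false]) ++ List.replicate (min n 1) false

/-- The value (1-based) of the largest entry to the right of position `i` (`0` if none). -/
def nextMaxVal {n : ℕ} (σ : Equiv.Perm (Fin n)) (i : Fin n) : ℕ :=
  ((((List.finRange n).filter fun j => decide (i < j)).map fun j => (σ j : ℕ) + 1)).foldr max 0

/-- The map μ: reading right to left, each RTL maximum M_i gives U^(M_i-M_{i-1}) D,
each non-maximum gives a D step. -/
def muWord {n : ℕ} (σ : Equiv.Perm (Fin n)) : List Bool :=
  (List.finRange n).reverse.flatMap fun i =>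
    if IsRTLMax σ i then
      List.replicate (((σ i : ℕ) + 1) - nextMaxVal σ i) true ++ [false]
    else [false]

/-- The set of partial sums of ascent lengths of a Dyck word (including the total). -/
def ascCode (p : List Bool) : Finset ℕ :=
  ((Finset.range p.length).filter fun i =>
      0 < i ∧ p.getD (i-1) false = true ∧ p.getD i true = false).image
    fun i => (p.take i).count true

/-- The set of partial sums of descent lengths of a Dyck word (excluding the total). -/
def descCode (p : List Bool) : Finset ℕ :=
  ((Finset.range p.length).filter fun i =>
      0 < i ∧ p.getD (i-1) true = false ∧ p.getD i false = true).image
    fun i => (p.take i).count false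

/-- Index of the first return of a Dyck word. -/
def firstRet (p : List Bool) : ℕ :=
  (((List.range (p.length + 1)).filter fun i =>
      decide (0 < i) && decide ((p.take i).count true = (p.take i).count false)).head?).getD p.length

def compsAux : ℕ → List Bool → List (List Bool)
  | 0, _ => []
  | fuel+1, p => if p = [] then [] else
      p.take (firstRet p) :: compsAux fuel (p.drop (firstRet p))

/-- Decomposition of a Dyck word into irreducible components. -/
def comps (p : List Bool) : List (List Bool) := compsAux p.length p

/-- The involution L' on an irreducible Dyck path, via ascent-descent codes. -/
def LprimeIrr (p : List Bool) : List Bool :=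
  let n := p.count true
  let A' := ((Finset.Icc 1 (n-2) \ ((ascCode p).erase n).image fun a => a - 1).image
      fun a => n - a).sort (· ≤ ·)
  let D' := ((Finset.Icc 1 (n-2) \ descCode p).image fun d => n - 1 - d).sort (· ≤ ·)
  pathOfCode n A' D'

/-- The involution L', acting on each irreducible component. -/
def LprimeWord (p : List Bool) : List Bool := (comps p).reverse.flatMap LprimeIrr

def ascList (p : List Bool) : List ℕ := ((ascCode p).erase (p.count true)).sort (· ≤ ·)
def descList (p : List Bool) : List ℕ := (descCode p).sort (· ≤ ·)

def IrreducibleDyck (p : List Bool) : Prop :=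
  IsDyckWord p ∧ p ≠ [] ∧ ∀ t, t <+: p → t ≠ [] → t ≠ p → t.count false < t.count true

/-- Covering relation: `Q` covers `P` if the code of `Q` is obtained from the code of
`P` by deleting `A_i` from the ascent code and `D_j` from the descent code, `i ≤ j`. -/
def CoversIrr (P Q : List Bool) : Prop :=
  IrreducibleDyck P ∧ IrreducibleDyck Q ∧
  ∃ i j : ℕ, i ≤ j ∧ ascList Q = (ascList P).eraseIdx i ∧ descList Q = (descList P).eraseIdx j

/-- The order relation on Dyck paths. -/
def DyckLE (P Q : List Bool) : Prop :=
  List.Forall₂ (Relation.ReflTransGen CoversIrr) (comps P) (comps Q)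


namespace LamAux
open List

theorem prefSplit {α : Type*} : ∀ (p t q : List α), t <+: p ++ q →
    t <+: p ∨ ∃ t', t = p ++ t' ∧ t' <+: q := by
  intro p
  induction p with
  | nil => intro t q h; exact Or.inr ⟨t, rfl, h⟩
  | cons a p ih =>
    intro t q h
    match t with
    | [] => exact Or.inl (List.nil_prefix)
    | b :: t =>
      rw [List.cons_append, List.cons_prefix_cons] at h
      obtain ⟨rfl, h⟩ := h
      rcases ih t q h with h1 | ⟨t', rfl, ht'⟩
      · exact Or.inl (List.cons_prefix_cons.2 ⟨rfl, h1⟩)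
      · exact Or.inr ⟨t', rfl, ht'⟩

/-- partial sums of a code -/
def S (c : ℕ → ℕ) (i : ℕ) : ℕ := ((List.range i).map c).sum

theorem S_zero (c : ℕ → ℕ) : S c 0 = 0 := rfl

theorem S_succ (c : ℕ → ℕ) (i : ℕ) : S c (i+1) = S c i + c i := by
  simp [S, List.range_succ]

theorem S_mono (c : ℕ → ℕ) {i j : ℕ} (h : i ≤ j) : S c i ≤ S c j := by
  induction j, h using Nat.le_induction with
  | base => exact le_refl _
  | succ j hj ih => rw [S_succ]; omega

def Valid (n : ℕ) (c : ℕ → ℕ) : Prop :=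
  (∀ i < n, i + 1 ≤ S c (i+1)) ∧ S c n = n ∧ ∀ i, n ≤ i → c i = 0

def dbl2 (l : List ℕ) : List Bool := l.flatMap fun g => List.replicate g true ++ [false]

def encode (n : ℕ) (c : ℕ → ℕ) : List Bool :=
  ((List.range n).flatMap fun i =>
    (if i = 0 then ([] : List Bool) else [false]) ++ List.replicate (c i) true)
  ++ List.replicate (min n 1) false

theorem dbl2_nil : dbl2 [] = [] := rfl
theorem dbl2_cons (g : ℕ) (l : List ℕ) :
    dbl2 (g :: l) = (List.replicate g true ++ [false]) ++ dbl2 l := by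
  simp [dbl2]

theorem shift_lemma : ∀ (l : List ℕ),
    (l.flatMap fun g => false :: List.replicate g true) ++ [false] = false :: dbl2 l := by
  intro l
  induction l with
  | nil => rfl
  | cons g l ih =>
    rw [List.flatMap_cons, dbl2_cons]
    simp only [List.cons_append, List.append_assoc] at *
    simp [ih]

theorem encode_eq_dbl2 (n : ℕ) (hn : 1 ≤ n) (c : ℕ → ℕ) :
    encode n c = dbl2 ((List.range n).map c) := by
  obtain ⟨m, rfl⟩ : ∃ m, n = m + 1 := ⟨n - 1, by omega⟩
  have h1 : List.range (m+1) = 0 :: (List.range m).map Nat.succ := List.range_succ_eq_map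
  rw [encode, h1]
  have hmin : min (m+1) 1 = 1 := by omega
  rw [hmin]
  simp only [List.flatMap_cons, List.map_cons, if_pos rfl, List.nil_append,
    List.flatMap_map, dbl2_cons]
  have h2 : ((List.range m).flatMap fun i =>
      (if Nat.succ i = 0 then ([] : List Bool) else [false]) ++ List.replicate (c (Nat.succ i)) true)
      = ((List.range m).map fun i => c (Nat.succ i)).flatMap
          fun g => false :: List.replicate g true := by
    rw [List.flatMap_map]
    apply List.flatMap_congr
    intro x hx
    simp
  rw [h2, List.map_map]
  have h3 := shift_lemma ((List.range m).map fun i => c (Nat.succ i))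
  simp only [List.replicate_one, if_pos trivial, List.nil_append, List.append_assoc, h3]
  rfl

theorem count_true_dbl2 (l : List ℕ) : (dbl2 l).count true = l.sum := by
  induction l with
  | nil => rfl
  | cons g l ih => simp [dbl2_cons, List.count_append, ih, List.count_replicate]

theorem count_false_dbl2 (l : List ℕ) : (dbl2 l).count false = l.length := by
  induction l with
  | nil => rfl
  | cons g l ih => simp [dbl2_cons, List.count_append, ih, List.count_replicate]

theorem dyck_dbl2 : ∀ (l : List ℕ) (h0 : ℕ),
    (∀ k < l.length, k + 1 ≤ h0 + (l.take (k+1)).sum) →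
    ∀ t, t <+: dbl2 l → t.count false ≤ h0 + t.count true := by
  intro l
  induction l with
  | nil =>
    intro h0 _ t ht
    rw [dbl2_nil, List.prefix_nil] at ht
    simp [ht]
  | cons g l ih =>
    intro h0 h t ht
    have hg : 1 ≤ h0 + g := by
      have := h 0 (by simp)
      simpa using this
    rw [dbl2_cons] at ht
    rcases prefSplit _ _ _ ht with h1 | ⟨t', rfl, ht'⟩
    · rcases prefSplit _ _ _ h1 with h2 | ⟨t'', rfl, ht''⟩
      · have : t.count false = 0 := by
          have hsub := h2.sublist
          have := hsub.count_le false
          simpa [List.count_replicate] using this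
        omega
      · have h4 : t''.count false ≤ 1 := by
          have := ht''.sublist.count_le false
          simpa using this
        have e1 : (List.replicate g true).count true = g := by simp [List.count_replicate]
        have e2 : (List.replicate g true).count false = 0 := by simp [List.count_replicate]
        rw [List.count_append, List.count_append, e1, e2]
        omega
    · have key : t'.count false ≤ (h0 + g - 1) + t'.count true := by
        apply ih (h0 + g - 1) _ t' ht'
        intro k hk
        have := h (k+1) (by simpa using Nat.succ_lt_succ hk)
        simp only [List.take_succ_cons, List.sum_cons] at this
        omega
      have e1 : (List.replicate g true).count true = g := by simp [List.count_replicate]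
      have e2 : (List.replicate g true).count false = 0 := by simp [List.count_replicate]
      have e3 : ([false] : List Bool).count false = 1 := rfl
      have e4 : ([false] : List Bool).count true = 0 := rfl
      rw [List.count_append, List.count_append, List.count_append, List.count_append,
        e1, e2, e3, e4]
      omega

theorem sum_map_range (c : ℕ → ℕ) (n : ℕ) : ((List.range n).map c).sum = S c n := rfl

theorem encode_isDyck {n : ℕ} {c : ℕ → ℕ} (hv : Valid n c) :
    IsDyckWord (encode n c) ∧ (encode n c).count true = n := by
  rcases Nat.eq_zero_or_pos n with rfl | hn
  · constructor
    · constructor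
      · intro t ht
        have : t = [] := List.prefix_nil.mp (by simpa [encode] using ht)
        simp [this]
      · simp [encode]
    · simp [encode]
  · rw [encode_eq_dbl2 n hn c]
    set l := (List.range n).map c with hl
    have hlen : l.length = n := by simp [hl]
    have hsum : l.sum = n := by rw [hl, sum_map_range]; exact hv.2.1
    have htake : ∀ k < n, (l.take (k+1)).sum = S c (k+1) := by
      intro k hk
      rw [hl, ← List.map_take, List.take_range, sum_map_range]
      congr 1
      omega
    refine ⟨⟨?_, ?_⟩, ?_⟩
    · intro t ht
      have := dyck_dbl2 l 0 ?_ t ht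
      · simpa using this
      · intro k hk
        rw [htake k (by omega)]
        simpa using hv.1 k (by omega)
    · rw [count_true_dbl2, count_false_dbl2, hsum, hlen]
    · rw [count_true_dbl2, hsum]

/-! ### parsing Dyck words into gap lists -/

def parse : List Bool → List ℕ
  | [] => [0]
  | false :: p => 0 :: parse p
  | true :: p =>
    match parse p with
    | [] => [1]
    | g :: gs => (g+1) :: gs

theorem parse_ne_nil : ∀ p : List Bool, parse p ≠ [] := by
  intro p
  match p with
  | [] => simp [parse]
  | false :: p => simp [parse]
  | true :: p =>
    rw [parse]
    rcases h : parse p with _ | ⟨g, gs⟩ <;> simp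

theorem parse_false (p : List Bool) : parse (false :: p) = 0 :: parse p := rfl

theorem parse_true (p : List Bool) :
    parse (true :: p) = ((parse p).headD 0 + 1) :: (parse p).tail := by
  rw [parse]
  rcases h : parse p with _ | ⟨g, gs⟩
  · exact absurd h (parse_ne_nil p)
  · simp

theorem dbl2_append (a b : List ℕ) : dbl2 (a ++ b) = dbl2 a ++ dbl2 b :=
  List.flatMap_append

theorem getLastD_cons2 (g g' : ℕ) (gs : List ℕ) :
    (g :: g' :: gs).getLastD 0 = (g' :: gs).getLastD 0 := by simp [List.getLastD]

theorem getLastD_one (g : ℕ) : ([g] : List ℕ).getLastD 0 = g := by simp [List.getLastD]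

theorem dbl2_zero_cons (l : List ℕ) : dbl2 (0 :: l) = false :: dbl2 l := by simp [dbl2]

theorem dbl2_succ_cons (g : ℕ) (l : List ℕ) :
    dbl2 ((g+1) :: l) = true :: dbl2 (g :: l) := by simp [dbl2, List.replicate_succ]

theorem dbl2_parse : ∀ p : List Bool,
    dbl2 ((parse p).dropLast) ++ List.replicate ((parse p).getLastD 0) true = p := by
  intro p
  induction p with
  | nil => rfl
  | cons b p ih =>
    obtain ⟨g, gs, hgs⟩ : ∃ g gs, parse p = g :: gs := by
      rcases h : parse p with _ | ⟨g, gs⟩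
      · exact absurd h (parse_ne_nil p)
      · exact ⟨g, gs, rfl⟩
    rw [hgs] at ih
    cases b
    · rw [parse_false, hgs]
      rcases gs with _ | ⟨g', gs'⟩
      · rw [show ([0, g] : List ℕ).dropLast = [0] by simp, getLastD_cons2, getLastD_one]
        rw [List.dropLast_singleton, getLastD_one] at ih
        rw [show dbl2 [0] = [false] from rfl]
        rw [dbl2_nil, List.nil_append] at ih
        rw [ih]
        rfl
      · rw [show (0 :: g :: g' :: gs').dropLast = 0 :: (g :: g' :: gs').dropLast by simp,
          getLastD_cons2, dbl2_zero_cons, List.cons_append, ih]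
    · rw [parse_true, hgs]
      simp only [List.headD_cons, List.tail_cons]
      rcases gs with _ | ⟨g', gs'⟩
      · rw [List.dropLast_singleton, getLastD_one]
        rw [List.dropLast_singleton, getLastD_one] at ih
        rw [dbl2_nil, List.nil_append] at ih ⊢
        rw [List.replicate_succ, ih]
      · rw [show ((g+1) :: g' :: gs').dropLast = (g+1) :: (g' :: gs').dropLast by simp,
          getLastD_cons2, dbl2_succ_cons, List.cons_append]
        rw [show (g :: g' :: gs').dropLast = g :: (g' :: gs').dropLast by simp,
          getLastD_cons2] at ih
        rw [ih]

theorem parse_replicate_append (q : List Bool) :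
    ∀ g : ℕ, parse (List.replicate g true ++ q)
      = (g + (parse q).headD 0) :: (parse q).tail := by
  intro g
  induction g with
  | zero =>
    simp only [List.replicate_zero, List.nil_append, Nat.zero_add]
    rcases h : parse q with _ | ⟨g', gs⟩
    · exact absurd h (parse_ne_nil q)
    · simp
  | succ g ih =>
    rw [List.replicate_succ, List.cons_append, parse_true, ih]
    simp only [List.headD_cons, List.tail_cons]
    congr 1
    omega

theorem parse_dbl2 : ∀ l : List ℕ, parse (dbl2 l) = l ++ [0] := by
  intro l
  induction l with
  | nil => rfl
  | cons g l ih =>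
    rw [dbl2_cons, List.append_assoc, List.singleton_append, parse_replicate_append,
      parse_false, ih]
    simp

theorem map_getD_range : ∀ l : List ℕ,
    (List.range l.length).map (fun i => l.getD i 0) = l := by
  intro l
  induction l with
  | nil => rfl
  | cons a l ih =>
    rw [List.length_cons, List.range_succ_eq_map, List.map_cons, List.map_map]
    refine congrArg₂ List.cons rfl ?_
    rw [show ((fun i => (a :: l).getD i 0) ∘ Nat.succ) = fun i => l.getD i 0 from
      funext fun i => rfl]
    exact ih

theorem encode_inj {n : ℕ} (hn : 1 ≤ n) {c c' : ℕ → ℕ}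
    (h : encode n c = encode n c') : ∀ i < n, c i = c' i := by
  rw [encode_eq_dbl2 n hn c, encode_eq_dbl2 n hn c'] at h
  have h2 : (List.range n).map c ++ [0] = (List.range n).map c' ++ [0] := by
    rw [← parse_dbl2, ← parse_dbl2, h]
  have h3 : (List.range n).map c = (List.range n).map c' := by
    exact List.append_cancel_right h2
  intro i hi
  have := congrArg (fun l => l.getD i 0) h3
  simpa [List.getD_eq_getElem?_getD, hi] using this

theorem dyck_ends_false {p : List Bool} (hd : IsDyckWord p) (hp : p ≠ []) :
    ∃ q, p = q ++ [false] := by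
  rcases List.eq_nil_or_concat p with rfl | ⟨q, b, rfl⟩
  · exact absurd rfl hp
  rw [List.concat_eq_append] at *
  cases b
  · exact ⟨q, rfl⟩
  · exfalso
    have h1 := hd.1 q (List.prefix_append q [true])
    have h2 := hd.2
    simp only [List.count_append] at h2
    have e3 : ([true] : List Bool).count false = 0 := rfl
    have e4 : ([true] : List Bool).count true = 1 := rfl
    rw [e3, e4] at h2
    omega

theorem dyck_decomp {n : ℕ} {p : List Bool} (hn : 1 ≤ n)
    (hd : IsDyckWord p) (hc : p.count true = n) :
    ∃ c, Valid n c ∧ encode n c = p := by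
  have hcf : p.count false = n := by rw [← hd.2, hc]
  have hp : p ≠ [] := by
    intro h
    rw [h] at hc
    simp at hc
    omega
  obtain ⟨q, hq⟩ := dyck_ends_false hd hp
  -- last gap is zero
  have hlast : (parse p).getLastD 0 = 0 := by
    by_contra hne
    obtain ⟨k, hk⟩ : ∃ k, (parse p).getLastD 0 = k + 1 := by
      rcases h : (parse p).getLastD 0 with _ | k
      · exact absurd h hne
      · exact ⟨k, rfl⟩
    have h1 := dbl2_parse p
    rw [hk] at h1
    have h2 : p.getLast? = some true := by
      rw [← h1, List.replicate_succ']
      rw [← List.append_assoc]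
      rw [List.getLast?_concat]
    have h3 : p.getLast? = some false := by
      rw [hq, List.getLast?_concat]
    rw [h2] at h3
    simp at h3
  have hp2 : dbl2 ((parse p).dropLast) = p := by
    have := dbl2_parse p
    rw [hlast] at this
    simpa using this
  set L := (parse p).dropLast with hL
  have hlen : L.length = n := by
    have := count_false_dbl2 L
    rw [hp2, hcf] at this
    omega
  refine ⟨fun i => L.getD i 0, ⟨?_, ?_, ?_⟩, ?_⟩
  · intro i hi
    have hpre : dbl2 (L.take (i+1)) <+: p := by
      rw [← hp2]
      conv => rhs; rw [show L = L.take (i+1) ++ L.drop (i+1) by simp]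
      rw [dbl2_append]
      exact List.prefix_append _ _
    have h1 := hd.1 _ hpre
    rw [count_false_dbl2, count_true_dbl2] at h1
    have h2 : (L.take (i+1)).length = i + 1 := by
      rw [List.length_take]
      omega
    have h3 : S (fun i => L.getD i 0) (i+1) = (L.take (i+1)).sum := by
      rw [S]
      congr 1
      have := map_getD_range (L.take (i+1))
      rw [h2] at this
      rw [← this]
      apply List.map_congr_left
      intro x hx
      rw [List.mem_range] at hx
      rw [List.getD_eq_getElem?_getD, List.getD_eq_getElem?_getD,
        List.getElem?_take_of_lt (by omega)]
    omega
  · rw [S]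
    have h3 : (List.range n).map (fun i => L.getD i 0) = L := by
      rw [← hlen]; exact map_getD_range L
    rw [h3]
    have := count_true_dbl2 L
    rw [hp2, hc] at this
    omega
  · intro i hi
    apply List.getD_eq_default
    omega
  · rw [encode_eq_dbl2 n hn]
    have h3 : (List.range n).map (fun i => L.getD i 0) = L := by
      rw [← hlen]; exact map_getD_range L
    rw [h3, hp2]

/-! ### decoding -/

def Mvals (n : ℕ) (c : ℕ → ℕ) : Finset ℕ :=
  ((Finset.range n).filter fun j => 0 < c j).image fun j => n - S c (j+1)

def Cl (n : ℕ) (c : ℕ → ℕ) : List ℕ :=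
  (List.range n).reverse.filter fun v => decide (v ∉ Mvals n c)

def rank (c : ℕ → ℕ) (i : ℕ) : ℕ :=
  ((List.range i).filter fun j => decide (c j = 0)).length

def mcount (c : ℕ → ℕ) (i : ℕ) : ℕ :=
  ((List.range i).filter fun j => decide (0 < c j)).length

def decF (n : ℕ) (c : ℕ → ℕ) (i : ℕ) : ℕ :=
  if 0 < c i then n - S c (i+1) else (Cl n c).getD (rank c i) 0

theorem mcount_eq (c : ℕ → ℕ) (i : ℕ) :
    mcount c i = ((Finset.range i).filter fun j => 0 < c j).card := rfl

theorem rank_add_mcount (c : ℕ → ℕ) : ∀ i, rank c i + mcount c i = i := by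
  intro i
  induction i with
  | zero => rfl
  | succ i ih =>
    rw [rank, mcount, List.range_succ, List.filter_append, List.filter_append,
      List.length_append, List.length_append]
    rw [rank, mcount] at ih
    rcases Nat.eq_zero_or_pos (c i) with h | h
    · have e1 : ([i].filter fun j => decide (c j = 0)) = [i] := by simp [h]
      have e2 : ([i].filter fun j => decide (0 < c j)) = [] := by simp [h]
      rw [e1, e2]
      simp only [List.length_cons, List.length_nil]
      omega
    · have e1 : ([i].filter fun j => decide (c j = 0)) = [] := by
        simp only [List.filter_cons, List.filter_nil]
        rw [if_neg (by simp; omega)]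
      have e2 : ([i].filter fun j => decide (0 < c j)) = [i] := by simp [h]
      rw [e1, e2]
      simp only [List.length_cons, List.length_nil]
      omega

theorem mcount_le (c : ℕ → ℕ) (i : ℕ) : mcount c i ≤ i := by
  have := rank_add_mcount c i; omega

theorem mcount_mono (c : ℕ → ℕ) {i j : ℕ} (h : i ≤ j) : mcount c i ≤ mcount c j := by
  rw [mcount_eq, mcount_eq]
  apply Finset.card_le_card
  apply Finset.filter_subset_filter
  exact Finset.range_subset_range.2 h

theorem pairwise_Cl (n : ℕ) (c : ℕ → ℕ) : (Cl n c).Pairwise (· > ·) := by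
  apply List.Pairwise.filter
  rw [List.pairwise_reverse]
  exact List.pairwise_lt_range

theorem mem_Cl {n : ℕ} {c : ℕ → ℕ} {v : ℕ} :
    v ∈ Cl n c ↔ v < n ∧ v ∉ Mvals n c := by
  simp [Cl, List.mem_filter, List.mem_reverse, List.mem_range]

theorem nodup_Cl (n : ℕ) (c : ℕ → ℕ) : (Cl n c).Nodup := by
  apply List.Nodup.filter
  exact List.nodup_reverse.2 (List.nodup_range)

theorem getD_descending_gt : ∀ (L : List ℕ), L.Pairwise (· > ·) → ∀ (B k : ℕ),
    k < (L.filter fun v => decide (B < v)).length → B < L.getD k 0 := by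
  intro L
  induction L with
  | nil => intro _ B k hk; simp at hk
  | cons a L ih =>
    intro hL B k hk
    rw [List.pairwise_cons] at hL
    by_cases hB : B < a
    · rw [List.filter_cons_of_pos (by simpa using hB)] at hk
      match k with
      | 0 => simpa using hB
      | k+1 =>
        have := ih hL.2 B k (by simpa using hk)
        simpa using this
    · exfalso
      rw [List.filter_cons_of_neg (by simpa using hB)] at hk
      have hnil : (L.filter fun v => decide (B < v)) = [] := by
        rw [List.filter_eq_nil_iff]
        intro v hv
        have := hL.1 v hv
        simp only [decide_eq_true_eq]
        omega
      rw [hnil] at hk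
      simp at hk

theorem S_const_of_zero {c : ℕ → ℕ} {a b : ℕ} (hab : a ≤ b)
    (h : ∀ l, a ≤ l → l < b → c l = 0) : S c b = S c a := by
  induction b, hab using Nat.le_induction with
  | base => rfl
  | succ b hb ih =>
    rw [S_succ, h b hb (by omega), ih fun l hl hl' => h l hl (by omega)]
    omega

def lastMin (c : ℕ → ℕ) (j : ℕ) : ℕ := Nat.findGreatest (fun l => 0 < c l) j

theorem lastMin_pos {c : ℕ → ℕ} (hc0 : 0 < c 0) (j : ℕ) : 0 < c (lastMin c j) := by
  unfold lastMin
  exact Nat.findGreatest_spec (P := fun l => 0 < c l) (Nat.zero_le j) hc0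

theorem lastMin_le (c : ℕ → ℕ) (j : ℕ) : lastMin c j ≤ j := Nat.findGreatest_le j

theorem S_lastMin {c : ℕ → ℕ} (j : ℕ) :
    S c (j+1) = S c (lastMin c j + 1) := by
  apply S_const_of_zero (by have := lastMin_le c j; omega)
  intro l hl hl'
  by_contra hne
  have h1 : lastMin c j < l := by omega
  have h2 : l ≤ j := by omega
  exact Nat.findGreatest_is_greatest h1 h2 (Nat.pos_of_ne_zero hne)

theorem c0_pos {n : ℕ} {c : ℕ → ℕ} (hv : Valid n c) (hn : 1 ≤ n) : 0 < c 0 := by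
  have := hv.1 0 hn
  rw [S_succ, S_zero] at this
  omega

theorem Mvals_subset_range {n : ℕ} {c : ℕ → ℕ} : Mvals n c ⊆ Finset.range n := by
  intro v hv
  rw [Mvals, Finset.mem_image] at hv
  obtain ⟨j, hj, rfl⟩ := hv
  rw [Finset.mem_filter, Finset.mem_range] at hj
  have h1 : 1 ≤ S c (j+1) := by rw [S_succ]; omega
  rw [Finset.mem_range]
  omega

theorem length_filter_Cl_gt {n : ℕ} {c : ℕ → ℕ} (hv : Valid n c) {j : ℕ}
    (hj : j < n) (hcj : c j = 0) :
    rank c j < ((Cl n c).filter fun v => decide (n - S c (j+1) < v)).length := by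
  have hn : 1 ≤ n := by omega
  have hc0 := c0_pos hv hn
  set s := S c (j+1) with hs
  set B := n - s with hB
  have hs1 : j + 1 ≤ s := hv.1 j hj
  have hs2 : s ≤ n := by
    have h := S_mono c (show j + 1 ≤ n by omega)
    rw [hv.2.1] at h
    exact h
  -- convert to a Finset cardinality
  have hconv : ((Cl n c).filter fun v => decide (B < v)).length
      = ((Finset.range n).filter fun v => v ∉ Mvals n c ∧ B < v).card := by
    rw [Cl, List.filter_filter]
    have h1 : ((List.range n).reverse.filter fun a =>
        (decide (B < a) && decide (a ∉ Mvals n c)))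
      = ((List.range n).reverse.filter fun v => decide (v ∉ Mvals n c ∧ B < v)) :=
      List.filter_congr fun v _ => by
        by_cases h1 : B < v <;> by_cases h2 : v ∈ Mvals n c <;> simp [h1, h2]
    rw [h1, List.filter_reverse, List.length_reverse]
    rfl
  rw [hconv]
  -- the sdiff computation
  set X := (Finset.range n).filter fun v => B < v with hX
  have hXcard : X.card = s - 1 := by
    have : X = Finset.Ico (B+1) n := by
      ext v
      simp [hX, Finset.mem_filter, Finset.mem_range, Finset.mem_Ico]
      omega
    rw [this, Nat.card_Ico]
    omega
  have hsub : (Finset.range n).filter (fun v => v ∉ Mvals n c ∧ B < v) = X \ Mvals n c := by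
    ext v
    simp [hX, Finset.mem_filter, Finset.mem_sdiff, Finset.mem_range]
    tauto
  rw [hsub]
  have hcard : (X \ Mvals n c).card = X.card - (X ∩ Mvals n c).card := by
    rw [← Finset.sdiff_inter_self_left, Finset.card_sdiff_of_subset Finset.inter_subset_left]
  -- bound the intersection
  have hj0le := lastMin_le c j
  have hj0pos := lastMin_pos hc0 j
  have hj0lt : lastMin c j < j := by
    rcases Nat.lt_or_ge (lastMin c j) j with h | h
    · exact h
    · exfalso
      have heq : lastMin c j = j := by omega
      rw [heq] at hj0pos
      omega
  have hSj0 : S c (lastMin c j + 1) = s := (S_lastMin j).symm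
  set T := (((Finset.range j).filter fun l => 0 < c l).erase (lastMin c j)) with hT
  have hinter : (X ∩ Mvals n c) ⊆ T.image fun l => n - S c (l+1) := by
    intro v hvmem
    rw [Finset.mem_inter] at hvmem
    obtain ⟨hvX, hvM⟩ := hvmem
    rw [hX, Finset.mem_filter, Finset.mem_range] at hvX
    rw [Mvals, Finset.mem_image] at hvM
    obtain ⟨l, hl, rfl⟩ := hvM
    rw [Finset.mem_filter, Finset.mem_range] at hl
    rw [Finset.mem_image]
    refine ⟨l, ?_, rfl⟩
    rw [hT, Finset.mem_erase, Finset.mem_filter, Finset.mem_range]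
    have hlj : l < j := by
      by_contra hge
      have hlgt : j < l := by
        rcases Nat.lt_or_ge l j with h | h
        · exact absurd h hge
        · rcases Nat.eq_or_lt_of_le h with h' | h'
          · subst h'; omega
          · exact h'
      have h5 : s + 1 ≤ S c (l+1) := by
        have h6 : S c (j+1) ≤ S c l := S_mono c (by omega)
        rw [S_succ]
        omega
      omega
    refine ⟨?_, hlj, hl.2⟩
    intro heq
    rw [heq, hSj0] at hvX
    omega
  have hj0mem : lastMin c j ∈ (Finset.range j).filter fun l => 0 < c l := by
    rw [Finset.mem_filter, Finset.mem_range]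
    exact ⟨hj0lt, hj0pos⟩
  have hTcard : T.card = mcount c j - 1 := by
    rw [hT, Finset.card_erase_of_mem hj0mem, mcount_eq]
  have hmc1 : 1 ≤ mcount c j := by
    rw [mcount_eq]
    have := Finset.card_pos.2 ⟨lastMin c j, hj0mem⟩
    omega
  have hintercard : (X ∩ Mvals n c).card ≤ mcount c j - 1 := by
    calc (X ∩ Mvals n c).card ≤ (T.image fun l => n - S c (l+1)).card :=
          Finset.card_le_card hinter
      _ ≤ T.card := Finset.card_image_le
      _ = mcount c j - 1 := hTcard
  have hrank : rank c j + mcount c j = j := rank_add_mcount c j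
  have hmcle : mcount c j ≤ j := mcount_le c j
  omega

theorem rank_lt_length_Cl {n : ℕ} {c : ℕ → ℕ} (hv : Valid n c) {j : ℕ}
    (hj : j < n) (hcj : c j = 0) : rank c j < (Cl n c).length := by
  have h := length_filter_Cl_gt hv hj hcj
  have h2 := List.length_filter_le (fun v => decide (n - S c (j+1) < v)) (Cl n c)
  omega

theorem key_gt {n : ℕ} {c : ℕ → ℕ} (hv : Valid n c) {j : ℕ}
    (hj : j < n) (hcj : c j = 0) :
    n - S c (j+1) < (Cl n c).getD (rank c j) 0 :=
  getD_descending_gt _ (pairwise_Cl n c) _ _ (length_filter_Cl_gt hv hj hcj)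

/-! ### generic foldr-min lemmas -/

theorem foldr_min_le_of_mem : ∀ {l : List ℕ} {x : ℕ}, x ∈ l → ∀ init, l.foldr min init ≤ x := by
  intro l
  induction l with
  | nil => intro x hx; simp at hx
  | cons a l ih =>
    intro x hx init
    rcases List.mem_cons.mp hx with rfl | hx
    · exact min_le_left _ _
    · exact le_trans (min_le_right _ _) (ih hx init)

theorem le_foldr_min : ∀ {l : List ℕ} {v init : ℕ}, (∀ x ∈ l, v ≤ x) → v ≤ init →
    v ≤ l.foldr min init := by
  intro l
  induction l with
  | nil => intro v init _ h2; simpa using h2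
  | cons a l ih =>
    intro v init h1 h2
    exact le_min (h1 a (by simp)) (ih (fun x hx => h1 x (by simp [hx])) h2)

theorem foldr_min_init : ∀ (l : List ℕ) (a init : ℕ),
    l.foldr min (min a init) = min a (l.foldr min init) := by
  intro l
  induction l with
  | nil => intro a init; rfl
  | cons b l ih =>
    intro a init
    rw [List.foldr_cons, List.foldr_cons, ih, min_left_comm]

theorem foldr_min_append (l : List ℕ) (a init : ℕ) :
    (l ++ [a]).foldr min init = min a (l.foldr min init) := by
  rw [List.foldr_append, List.foldr_cons, List.foldr_nil, foldr_min_init]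

/-! ### conversion of prevMinVal to a range fold -/

/-- the value of `σ` at a numeric position -/
def pval {n : ℕ} (σ : Equiv.Perm (Fin n)) (j : ℕ) : ℕ :=
  if h : j < n then (σ ⟨j, h⟩ : Fin n).val else 0

theorem pval_lt {n : ℕ} (σ : Equiv.Perm (Fin n)) {j : ℕ} (hj : j < n) :
    pval σ j < n := by
  rw [pval, dif_pos hj]
  exact (σ ⟨j, hj⟩).isLt

theorem pval_inj {n : ℕ} (σ : Equiv.Perm (Fin n)) {i j : ℕ} (hi : i < n) (hj : j < n)
    (h : pval σ i = pval σ j) : i = j := by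
  rw [pval, pval, dif_pos hi, dif_pos hj] at h
  have h2 : (⟨i, hi⟩ : Fin n) = ⟨j, hj⟩ := σ.injective (Fin.ext h)
  exact congrArg Fin.val h2

theorem filter_range_lt : ∀ (n k : ℕ), k ≤ n →
    (List.range n).filter (fun v => decide (v < k)) = List.range k := by
  intro n
  induction n with
  | zero => intro k hk; interval_cases k; rfl
  | succ n ih =>
    intro k hk
    rcases Nat.eq_or_lt_of_le hk with rfl | hlt
    · apply List.filter_eq_self.2
      intro v hv
      rw [List.mem_range] at hv
      simpa using hv
    · rw [List.range_succ, List.filter_append, ih k (by omega)]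
      rw [show ([n].filter fun v => decide (v < k)) = [] by simp; omega]
      simp

/-- the fold defining `prevMinVal`, in numeric form -/
def PMf {n : ℕ} (σ : Equiv.Perm (Fin n)) (k : ℕ) : ℕ :=
  ((List.range k).map fun j => pval σ j + 1).foldr min (n + 1)

theorem prevMinVal_eq_PMf {n : ℕ} (σ : Equiv.Perm (Fin n)) (i : Fin n) :
    prevMinVal σ i = PMf σ i.val := by
  rw [prevMinVal, PMf]
  congr 1
  have h1 : ((List.finRange n).filter fun j => decide (j < i)).map (fun j => (σ j : ℕ) + 1)
      = ((List.finRange n).filter fun j => decide (j < i)).map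
          (fun j => (fun v => pval σ v + 1) j.val) := by
    apply List.map_congr_left
    intro j _
    simp [pval, j.isLt]
  rw [h1]
  have h2 : ∀ (l : List (Fin n)), (l.filter fun j => decide (j < i)).map
      (fun j => (fun v => pval σ v + 1) j.val)
      = ((l.map Fin.val).filter fun v => decide (v < i.val)).map (fun v => pval σ v + 1) := by
    intro l
    induction l with
    | nil => rfl
    | cons a l ihl =>
      by_cases h : a < i
      · have h' : a.val < i.val := h
        rw [List.filter_cons_of_pos (by simpa using h), List.map_cons, List.map_cons,
          List.filter_cons_of_pos (by simpa using h'), List.map_cons, ihl]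
      · have h' : ¬ a.val < i.val := h
        rw [List.filter_cons_of_neg (by simpa using h), List.map_cons,
          List.filter_cons_of_neg (by simpa using h'), ihl]
  rw [h2]
  congr 1
  rw [List.map_coe_finRange_eq_range]
  exact filter_range_lt n i.val (le_of_lt i.isLt)

/-! ### the decoded permutation -/

theorem S_le_n {n : ℕ} {c : ℕ → ℕ} (hv : Valid n c) {i : ℕ} (hi : i ≤ n) : S c i ≤ n := by
  have := S_mono c hi
  rw [hv.2.1] at this
  exact this

theorem S_lt_S {c : ℕ → ℕ} {i j : ℕ} (hij : i < j) (hcj : 0 < c j) :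
    S c (i+1) < S c (j+1) := by
  have h1 : S c (i+1) ≤ S c j := S_mono c hij
  rw [S_succ c j]
  omega

theorem decF_lt {n : ℕ} {c : ℕ → ℕ} (hv : Valid n c) {i : ℕ} (hi : i < n) :
    decF n c i < n := by
  rw [decF]
  split
  · rename_i h
    have h1 : 1 ≤ S c (i+1) := by rw [S_succ]; omega
    omega
  · rename_i h
    have hm := rank_lt_length_Cl hv hi (by omega)
    have : (Cl n c).getD (rank c i) 0 ∈ Cl n c := by
      rw [List.getD_eq_getElem _ _ hm]
      exact List.getElem_mem hm
    exact (mem_Cl.mp this).1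

theorem decF_min_lt {n : ℕ} {c : ℕ → ℕ} (hv : Valid n c) {i j : ℕ} (hj : j < i)
    (hi : i < n) (hc : 0 < c i) : decF n c i < decF n c j := by
  have hSi : S c (i+1) ≤ n := S_le_n hv (by omega)
  have hstrict : S c (j+1) < S c (i+1) := S_lt_S hj hc
  rw [decF, if_pos hc, decF]
  split
  · omega
  · rename_i h
    have hk := key_gt hv (show j < n by omega) (show c j = 0 by omega)
    omega

theorem decF_nonmin_witness {n : ℕ} {c : ℕ → ℕ} (hv : Valid n c) {i : ℕ}
    (hi : i < n) (hc : c i = 0) : ∃ j, j < i ∧ decF n c j < decF n c i := by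
  have hc0 := c0_pos hv (by omega)
  have hj0pos := lastMin_pos hc0 i
  have hj0le := lastMin_le c i
  have hj0lt : lastMin c i < i := by
    rcases Nat.eq_or_lt_of_le hj0le with h | h
    · exfalso; rw [h] at hj0pos; omega
    · exact h
  refine ⟨lastMin c i, hj0lt, ?_⟩
  rw [decF, if_pos hj0pos, decF, if_neg (by omega)]
  have h1 := key_gt hv hi hc
  have h2 : S c (lastMin c i + 1) = S c (i+1) := (S_lastMin i).symm
  rw [h2]
  exact h1

theorem rank_eq (c : ℕ → ℕ) (i : ℕ) :
    rank c i = ((Finset.range i).filter fun j => c j = 0).card := rfl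

theorem rank_succ_of_zero {c : ℕ → ℕ} {i : ℕ} (h : c i = 0) :
    rank c (i+1) = rank c i + 1 := by
  rw [rank, rank, List.range_succ, List.filter_append]
  simp [h]

theorem rank_mono (c : ℕ → ℕ) {i j : ℕ} (h : i ≤ j) : rank c i ≤ rank c j := by
  rw [rank_eq, rank_eq]
  exact Finset.card_le_card (Finset.filter_subset_filter _ (Finset.range_subset_range.2 h))

theorem rank_strict {c : ℕ → ℕ} {i j : ℕ} (h : i < j) (hci : c i = 0) :
    rank c i < rank c j := by
  have h1 := rank_succ_of_zero hci
  have h2 := rank_mono c (show i + 1 ≤ j by omega)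
  omega

theorem getD_Cl_strict {n : ℕ} {c : ℕ → ℕ} {k l : ℕ} (hkl : k < l)
    (hl : l < (Cl n c).length) : (Cl n c).getD l 0 < (Cl n c).getD k 0 := by
  have hx := pairwise_Cl n c
  rw [List.pairwise_iff_getElem] at hx
  have := hx k l (by omega) hl hkl
  rw [List.getD_eq_getElem _ _ (show k < (Cl n c).length by omega),
    List.getD_eq_getElem _ _ hl]
  exact this

theorem decF_mem_Mvals {n : ℕ} {c : ℕ → ℕ} {i : ℕ} (hi : i < n) (hc : 0 < c i) :
    decF n c i ∈ Mvals n c := by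
  rw [decF, if_pos hc, Mvals, Finset.mem_image]
  exact ⟨i, by rw [Finset.mem_filter, Finset.mem_range]; exact ⟨hi, hc⟩, rfl⟩

theorem decF_mem_Cl {n : ℕ} {c : ℕ → ℕ} (hv : Valid n c) {i : ℕ} (hi : i < n)
    (hc : c i = 0) : decF n c i ∈ Cl n c := by
  rw [decF, if_neg (by omega)]
  have hm := rank_lt_length_Cl hv hi hc
  rw [List.getD_eq_getElem _ _ hm]
  exact List.getElem_mem hm

theorem decF_inj {n : ℕ} {c : ℕ → ℕ} (hv : Valid n c) : ∀ {i j : ℕ}, i < n → j < n →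
    decF n c i = decF n c j → i = j := by
  have main : ∀ {i j : ℕ}, i < j → j < n → decF n c i = decF n c j → False := by
    intro i j hij hj h
    rcases Nat.eq_zero_or_pos (c i) with hci | hci <;>
      rcases Nat.eq_zero_or_pos (c j) with hcj | hcj
    · -- both zero
      have hri := rank_lt_length_Cl hv (by omega) hci
      have hrj := rank_lt_length_Cl hv hj hcj
      have hrr := rank_strict hij hci
      have := getD_Cl_strict (n := n) (c := c) hrr hrj
      rw [decF, if_neg (by omega), decF, if_neg (by omega)] at h
      omega
    · -- i zero, j pos
      have h1 := decF_mem_Cl hv (by omega) hci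
      have h2 := decF_mem_Mvals (c := c) hj hcj
      rw [h] at h1
      exact (mem_Cl.mp h1).2 h2
    · -- i pos, j zero
      have h1 := decF_mem_Cl hv hj hcj
      have h2 := decF_mem_Mvals (c := c) (show i < n by omega) hci
      rw [← h] at h1
      exact (mem_Cl.mp h1).2 h2
    · -- both pos
      have := decF_min_lt hv hij hj hcj
      omega
  intro i j hi hj h
  by_contra hne
  rcases Nat.lt_or_ge i j with hlt | hge
  · exact main hlt hj h
  · exact main (show j < i by omega) hi h.symm

noncomputable def decPerm {n : ℕ} {c : ℕ → ℕ} (hv : Valid n c) : Equiv.Perm (Fin n) :=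
  Equiv.ofBijective (fun i => (⟨decF n c i.val, decF_lt hv i.isLt⟩ : Fin n))
    (Finite.injective_iff_bijective.mp fun i j h =>
      Fin.ext (decF_inj hv i.isLt j.isLt (congrArg Fin.val h)))

theorem decPerm_apply {n : ℕ} {c : ℕ → ℕ} (hv : Valid n c) (i : Fin n) :
    ((decPerm hv) i : ℕ) = decF n c i.val := rfl

def codeF {n : ℕ} (σ : Equiv.Perm (Fin n)) : ℕ → ℕ := fun i =>
  if h : i < n then
    (if IsLTRMin σ ⟨i, h⟩ then prevMinVal σ ⟨i, h⟩ - ((σ ⟨i, h⟩ : ℕ) + 1) else 0)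
  else 0

theorem isLTRMin_zero {n : ℕ} (σ : Equiv.Perm (Fin n)) (i : Fin n) (h : (i : ℕ) = 0) :
    IsLTRMin σ i := by
  intro j hj
  exact absurd (show (j : ℕ) < (i : ℕ) from hj) (by omega)

theorem lamWord_eq_encode {n : ℕ} (σ : Equiv.Perm (Fin n)) :
    lamWord σ = encode n (codeF σ) := by
  rw [lamWord, encode]
  congr 1
  rw [← List.map_coe_finRange_eq_range, List.flatMap_map]
  apply List.flatMap_congr
  intro i _
  by_cases hm : IsLTRMin σ i
  · rw [if_pos hm, codeF, dif_pos i.isLt]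
    simp only [Fin.eta]
    rw [if_pos hm]
  · rw [if_neg hm, codeF, dif_pos i.isLt]
    simp only [Fin.eta]
    rw [if_neg hm]
    have h0 : (i : ℕ) ≠ 0 := fun h => hm (isLTRMin_zero σ i h)
    simp [h0]

theorem decPerm_min_iff {n : ℕ} {c : ℕ → ℕ} (hv : Valid n c) (i : Fin n) :
    IsLTRMin (decPerm hv) i ↔ 0 < c i.val := by
  constructor
  · intro hmin
    by_contra hc
    have hc0 : c i.val = 0 := by omega
    obtain ⟨j, hji, hlt⟩ := decF_nonmin_witness hv i.isLt hc0
    have hjn : j < n := by omega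
    have := hmin ⟨j, hjn⟩ (show (⟨j, hjn⟩ : Fin n) < i from hji)
    rw [show ((decPerm hv) i < (decPerm hv) ⟨j, hjn⟩) ↔
      (decF n c i.val < decF n c j) from Iff.rfl] at this
    omega
  · intro hc j hj
    exact decF_min_lt hv (show (j : ℕ) < (i : ℕ) from hj) i.isLt hc

theorem decPerm_prevMinVal {n : ℕ} {c : ℕ → ℕ} (hv : Valid n c) (i : Fin n) :
    prevMinVal (decPerm hv) i = n + 1 - S c i.val := by
  rw [prevMinVal_eq_PMf, PMf]
  have hmap : (List.range i.val).map (fun j => pval (decPerm hv) j + 1)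
      = (List.range i.val).map (fun j => decF n c j + 1) := by
    apply List.map_congr_left
    intro j hj
    rw [List.mem_range] at hj
    have hjn : j < n := by have := i.isLt; omega
    rw [pval, dif_pos hjn]
    rfl
  rw [hmap]
  have hSi : S c i.val ≤ n := S_le_n hv (le_of_lt i.isLt)
  apply _root_.le_antisymm
  · rcases Nat.eq_zero_or_pos i.val with h0 | h0
    · rw [h0]
      simp [S_zero]
    · have hc0 := c0_pos hv (by have := i.isLt; omega)
      have hj0pos := lastMin_pos hc0 (i.val - 1)
      have hj0le := lastMin_le c (i.val - 1)
      have hSlm : S c (lastMin c (i.val - 1) + 1) = S c i.val := by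
        have := S_lastMin (c := c) (i.val - 1)
        rw [show i.val - 1 + 1 = i.val by omega] at this
        exact this.symm
      have hmem : decF n c (lastMin c (i.val - 1)) + 1 ∈
          (List.range i.val).map (fun j => decF n c j + 1) := by
        rw [List.mem_map]
        exact ⟨lastMin c (i.val - 1), by rw [List.mem_range]; omega, rfl⟩
      have hle := foldr_min_le_of_mem hmem (n+1)
      have hval : decF n c (lastMin c (i.val - 1)) = n - S c i.val := by
        rw [decF, if_pos hj0pos, hSlm]
      omega
  · apply le_foldr_min
    · intro x hx
      rw [List.mem_map] at hx
      obtain ⟨j, hj, rfl⟩ := hx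
      rw [List.mem_range] at hj
      have hjn : j < n := by have := i.isLt; omega
      have hSj : S c (j+1) ≤ S c i.val := S_mono c (by omega)
      have hSj2 : S c (j+1) ≤ n := by omega
      rcases Nat.eq_zero_or_pos (c j) with hcj | hcj
      · have hk := key_gt hv hjn hcj
        rw [decF, if_neg (by omega)]
        omega
      · rw [decF, if_pos hcj]
        omega
    · omega

theorem codeF_decPerm {n : ℕ} {c : ℕ → ℕ} (hv : Valid n c) : codeF (decPerm hv) = c := by
  funext i
  rw [codeF]
  by_cases hi : i < n
  · rw [dif_pos hi]
    by_cases hc : 0 < c i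
    · rw [if_pos ((decPerm_min_iff hv ⟨i, hi⟩).2 hc)]
      rw [decPerm_prevMinVal hv ⟨i, hi⟩]
      rw [show ((⟨i, hi⟩ : Fin n) : ℕ) = i from rfl]
      rw [show ((decPerm hv) ⟨i, hi⟩ : ℕ) = decF n c i from rfl]
      rw [decF, if_pos hc]
      have h1 : S c (i+1) ≤ n := S_le_n hv (by omega)
      have h2 : S c (i+1) = S c i + c i := S_succ c i
      omega
    · rw [if_neg]
      · omega
      · rw [decPerm_min_iff hv ⟨i, hi⟩]
        simpa using hc
  · rw [dif_neg hi]
    exact (hv.2.2 i (by omega)).symm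

theorem decPerm_avoids {n : ℕ} {c : ℕ → ℕ} (hv : Valid n c) : Avoids123 (decPerm hv) := by
  rintro ⟨i, j, k, hij, hjk, h1, h2⟩
  have hcj : c j.val = 0 := by
    by_contra hc
    have hmin := (decPerm_min_iff hv j).2 (Nat.pos_of_ne_zero hc)
    have := hmin i hij
    exact absurd h1 (by omega)
  have hck : c k.val = 0 := by
    by_contra hc
    have hmin := (decPerm_min_iff hv k).2 (Nat.pos_of_ne_zero hc)
    have := hmin j hjk
    exact absurd h2 (by omega)
  have hrr := rank_strict (show j.val < k.val from hjk) hcj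
  have hrk := rank_lt_length_Cl hv k.isLt hck
  have hgetd := getD_Cl_strict (n := n) (c := c) hrr hrk
  have e1 : ((decPerm hv) j : ℕ) = (Cl n c).getD (rank c j.val) 0 := by
    rw [decPerm_apply, decF, if_neg (by omega)]
  have e2 : ((decPerm hv) k : ℕ) = (Cl n c).getD (rank c k.val) 0 := by
    rw [decPerm_apply, decF, if_neg (by omega)]
  have hlt : ((decPerm hv) j : ℕ) < ((decPerm hv) k : ℕ) := h2
  omega

/-! ### forward analysis of an arbitrary permutation -/

theorem PMf_succ {n : ℕ} (σ : Equiv.Perm (Fin n)) (k : ℕ) :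
    PMf σ (k+1) = min (pval σ k + 1) (PMf σ k) := by
  rw [PMf, PMf, List.range_succ, List.map_append, List.map_cons, List.map_nil,
    foldr_min_append]

theorem PMf_zero {n : ℕ} (σ : Equiv.Perm (Fin n)) : PMf σ 0 = n + 1 := rfl

theorem PMf_S {n : ℕ} (σ : Equiv.Perm (Fin n)) :
    ∀ k, k ≤ n → S (codeF σ) k ≤ n ∧ PMf σ k + S (codeF σ) k = n + 1 := by
  intro k
  induction k with
  | zero => intro _; rw [S_zero, PMf_zero]; omega
  | succ k ih =>
    intro hk1
    have hk : k < n := by omega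
    obtain ⟨ih1, ih2⟩ := ih (by omega)
    have hpvk : pval σ k < n := pval_lt σ hk
    rw [S_succ, PMf_succ]
    have hcode : codeF σ k = if IsLTRMin σ ⟨k, hk⟩ then
        prevMinVal σ ⟨k, hk⟩ - ((σ ⟨k, hk⟩ : ℕ) + 1) else 0 := by
      rw [codeF, dif_pos hk]
    by_cases hm : IsLTRMin σ ⟨k, hk⟩
    · have hle : pval σ k + 1 ≤ PMf σ k := by
        apply le_foldr_min
        · intro x hx
          rw [List.mem_map] at hx
          obtain ⟨j, hj, rfl⟩ := hx
          rw [List.mem_range] at hj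
          have hjn : j < n := by omega
          have := hm ⟨j, hjn⟩ (show (⟨j, hjn⟩ : Fin n) < ⟨k, hk⟩ from hj)
          have hvv : pval σ k < pval σ j := by
            rw [pval, pval, dif_pos hk, dif_pos hjn]
            exact this
          omega
        · omega
      have hcv : codeF σ k = PMf σ k - (pval σ k + 1) := by
        rw [hcode, if_pos hm, prevMinVal_eq_PMf]
        rw [show ((σ ⟨k, hk⟩ : Fin n) : ℕ) = pval σ k from by rw [pval, dif_pos hk]]
      rw [hcv, min_eq_left hle]
      omega
    · have hcv : codeF σ k = 0 := by rw [hcode, if_neg hm]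
      have hwit : ∃ j, j < k ∧ pval σ j ≤ pval σ k := by
        rw [IsLTRMin] at hm
        push_neg at hm
        obtain ⟨j, hj, hle⟩ := hm
        refine ⟨j.val, hj, ?_⟩
        have : σ j ≤ σ ⟨k, hk⟩ := hle
        rw [pval, pval, dif_pos hk, dif_pos (j.isLt)]
        simpa [Fin.eta] using this
      obtain ⟨j, hjk, hle⟩ := hwit
      have hmem : pval σ j + 1 ∈ (List.range k).map (fun j => pval σ j + 1) := by
        rw [List.mem_map]
        exact ⟨j, by rw [List.mem_range]; omega, rfl⟩
      have h2 := foldr_min_le_of_mem hmem (n+1)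
      rw [← PMf] at h2
      rw [hcv, min_eq_right (by omega)]
      omega

theorem valid_codeF {n : ℕ} (σ : Equiv.Perm (Fin n)) (hn : 1 ≤ n) :
    Valid n (codeF σ) := by
  refine ⟨?_, ?_, ?_⟩
  · intro i hi
    obtain ⟨h1, h2⟩ := PMf_S σ (i+1) (by omega)
    -- pigeonhole : some of the first i+1 values is ≤ n-1-i
    have hpig : ∃ j ≤ i, pval σ j + 1 ≤ n - i := by
      by_contra hall
      push_neg at hall
      set T := (Finset.range (i+1)).image (pval σ) with hT
      have hcard : T.card = i + 1 := by
        rw [hT, Finset.card_image_of_injOn, Finset.card_range]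
        intro a ha b hb hab
        rw [Finset.mem_coe, Finset.mem_range] at ha hb
        exact pval_inj σ (by omega) (by omega) hab
      have hsubs : T ⊆ Finset.Ico (n - i) n := by
        intro v hvmem
        rw [hT, Finset.mem_image] at hvmem
        obtain ⟨j, hj, rfl⟩ := hvmem
        rw [Finset.mem_range] at hj
        have := hall j (by omega)
        have := pval_lt σ (show j < n by omega)
        rw [Finset.mem_Ico]
        omega
      have := Finset.card_le_card hsubs
      rw [hcard, Nat.card_Ico] at this
      omega
    obtain ⟨j, hji, hjv⟩ := hpig
    have hmem : pval σ j + 1 ∈ (List.range (i+1)).map (fun j => pval σ j + 1) := by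
      rw [List.mem_map]
      exact ⟨j, by rw [List.mem_range]; omega, rfl⟩
    have h3 := foldr_min_le_of_mem hmem (n+1)
    rw [← PMf] at h3
    omega
  · obtain ⟨h1, h2⟩ := PMf_S σ n (le_refl n)
    have h0 : 0 < n := hn
    set z : Fin n := σ.symm ⟨0, h0⟩ with hz
    have hv0 : pval σ z.val = 0 := by
      rw [pval, dif_pos z.isLt, Fin.eta, hz, Equiv.apply_symm_apply]
    have hmem : pval σ z.val + 1 ∈ (List.range n).map (fun j => pval σ j + 1) := by
      rw [List.mem_map]
      exact ⟨z.val, by rw [List.mem_range]; exact z.isLt, rfl⟩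
    have h3 := foldr_min_le_of_mem hmem (n+1)
    rw [← PMf, hv0] at h3
    omega
  · intro i hi
    rw [codeF, dif_neg (by omega)]

theorem min_iff_codeF_pos {n : ℕ} (σ : Equiv.Perm (Fin n)) {i : ℕ} (hi : i < n) :
    IsLTRMin σ ⟨i, hi⟩ ↔ 0 < codeF σ i := by
  constructor
  · intro hm
    rw [codeF, dif_pos hi, if_pos hm, prevMinVal_eq_PMf]
    rw [show ((⟨i, hi⟩ : Fin n) : ℕ) = i from rfl]
    have hle : pval σ i + 2 ≤ PMf σ i := by
      apply le_foldr_min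
      · intro x hx
        rw [List.mem_map] at hx
        obtain ⟨j, hj, rfl⟩ := hx
        rw [List.mem_range] at hj
        have hjn : j < n := by omega
        have := hm ⟨j, hjn⟩ (show (⟨j, hjn⟩ : Fin n) < ⟨i, hi⟩ from hj)
        have hvv : pval σ i < pval σ j := by
          rw [pval, pval, dif_pos hi, dif_pos hjn]
          exact this
        omega
      · have := pval_lt σ hi
        omega
    rw [show ((σ ⟨i, hi⟩ : Fin n) : ℕ) = pval σ i from by rw [pval, dif_pos hi]]
    omega
  · intro hc
    by_contra hm
    rw [codeF, dif_pos hi, if_neg hm] at hc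
    omega

theorem pval_min_eq {n : ℕ} (σ : Equiv.Perm (Fin n)) {i : ℕ} (hi : i < n)
    (hc : 0 < codeF σ i) : pval σ i = n - S (codeF σ) (i+1) := by
  have hm := (min_iff_codeF_pos σ hi).2 hc
  obtain ⟨h1, h2⟩ := PMf_S σ i (by omega)
  obtain ⟨h3, h4⟩ := PMf_S σ (i+1) (by omega)
  have hcv : codeF σ i = prevMinVal σ ⟨i, hi⟩ - ((σ ⟨i, hi⟩ : ℕ) + 1) := by
    rw [codeF, dif_pos hi, if_pos hm]
  rw [prevMinVal_eq_PMf] at hcv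
  rw [show ((⟨i, hi⟩ : Fin n) : ℕ) = i from rfl] at hcv
  rw [show ((σ ⟨i, hi⟩ : Fin n) : ℕ) = pval σ i from by rw [pval, dif_pos hi]] at hcv
  have hS := S_succ (codeF σ) i
  have := pval_lt σ hi
  omega

theorem getD_map_nat (l : List ℕ) (f : ℕ → ℕ) {k : ℕ} (hk : k < l.length) :
    (l.map f).getD k 0 = f (l.getD k 0) := by
  rw [List.getD_eq_getElem _ _ (by simpa using hk), List.getD_eq_getElem _ _ hk,
    List.getElem_map]

theorem getD_filter_range (p : ℕ → Bool) : ∀ (m i : ℕ), i < m → p i = true →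
    (((List.range m).filter p).getD (((List.range i).filter p).length) 0) = i ∧
    ((List.range i).filter p).length < ((List.range m).filter p).length := by
  intro m
  induction m with
  | zero => intro i hi _; omega
  | succ m ih =>
    intro i hi hp
    rw [List.range_succ, List.filter_append]
    rcases Nat.lt_or_ge i m with him | him
    · obtain ⟨h1, h2⟩ := ih i him hp
      constructor
      · rw [List.getD_append _ _ _ _ h2]
        exact h1
      · rw [List.length_append]
        omega
    · have hieq : i = m := by omega
      subst hieq
      have hfil : [i].filter p = [i] := by simp [hp]
      rw [hfil]
      constructor
      · rw [List.getD_append_right _ _ _ _ (le_refl _)]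
        simp
      · rw [List.length_append]
        simp

theorem count_bool (l : List Bool) : l.count true + l.count false = l.length := by
  induction l with
  | nil => rfl
  | cons b l ih =>
    cases b <;> simp [List.count_cons] <;> omega

theorem nonmin_map_eq_Cl {n : ℕ} {σ : Equiv.Perm (Fin n)} (hσ : Avoids123 σ) :
    ((List.range n).filter fun j => decide (codeF σ j = 0)).map (pval σ)
      = Cl n (codeF σ) := by
  haveI : IsAntisymm ℕ (· > ·) := ⟨fun a b h1 h2 => by omega⟩
  have key : ∀ {l1 l2 : List ℕ}, l1.Perm l2 → l1.Pairwise (· > ·) → l2.Pairwise (· > ·) → l1 = l2 :=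
    fun h1 h2 h3 => List.Perm.eq_of_pairwise' h2 h3 h1
  apply key
  · rw [List.perm_ext_iff_of_nodup]
    · intro a
      constructor
      · intro ha
        rw [List.mem_map] at ha
        obtain ⟨j, hj, rfl⟩ := ha
        rw [List.mem_filter, List.mem_range] at hj
        obtain ⟨hjn, hjz⟩ := hj
        rw [decide_eq_true_eq] at hjz
        rw [mem_Cl]
        refine ⟨pval_lt σ hjn, ?_⟩
        intro hmem
        rw [Mvals, Finset.mem_image] at hmem
        obtain ⟨l, hl, hval⟩ := hmem
        rw [Finset.mem_filter, Finset.mem_range] at hl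
        have hplv : pval σ l = pval σ j := by
          rw [pval_min_eq σ hl.1 hl.2, hval]
        have hlj := pval_inj σ hl.1 hjn hplv
        rw [hlj] at hl
        omega
      · intro ha
        rw [mem_Cl] at ha
        obtain ⟨han, ham⟩ := ha
        set z : Fin n := σ.symm ⟨a, han⟩ with hz
        have hva : pval σ z.val = a := by
          rw [pval, dif_pos z.isLt, Fin.eta, hz, Equiv.apply_symm_apply]
        have hzz : codeF σ z.val = 0 := by
          by_contra hc
          apply ham
          rw [Mvals, Finset.mem_image]
          refine ⟨z.val, ?_, ?_⟩
          · rw [Finset.mem_filter, Finset.mem_range]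
            exact ⟨z.isLt, Nat.pos_of_ne_zero hc⟩
          · rw [← pval_min_eq σ z.isLt (Nat.pos_of_ne_zero hc), hva]
        rw [List.mem_map]
        refine ⟨z.val, ?_, hva⟩
        rw [List.mem_filter, List.mem_range]
        exact ⟨z.isLt, by simpa using hzz⟩
    · apply List.Nodup.map_on
      · intro x hx y hy hxy
        rw [List.mem_filter, List.mem_range] at hx hy
        exact pval_inj σ hx.1 hy.1 hxy
      · exact (List.nodup_range).filter _
    · exact nodup_Cl n (codeF σ)
  · rw [List.pairwise_map]
    have hbase : ((List.range n).filter fun j => decide (codeF σ j = 0)).Pairwise (· < ·) :=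
      List.Pairwise.filter _ List.pairwise_lt_range
    rw [List.Pairwise.and_mem] at hbase
    apply hbase.imp
    intro a b hab
    obtain ⟨hamem, hbmem, haltb⟩ := hab
    rw [List.mem_filter, List.mem_range] at hamem hbmem
    have han : a < n := hamem.1
    have hbn : b < n := hbmem.1
    have haz : codeF σ a = 0 := by simpa using hamem.2
    have hbz : codeF σ b = 0 := by simpa using hbmem.2
    show pval σ a > pval σ b
    by_contra hle
    push_neg at hle
    have hne : pval σ a ≠ pval σ b := fun h => by
      have := pval_inj σ han hbn h; omega
    have hltv : pval σ a < pval σ b := by omega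
    -- a is not a LTR min: get a witness
    have hnm : ¬ IsLTRMin σ ⟨a, han⟩ := by
      rw [min_iff_codeF_pos σ han]
      omega
    rw [IsLTRMin] at hnm
    push_neg at hnm
    obtain ⟨j, hja, hjle⟩ := hnm
    have hjne : σ j ≠ σ ⟨a, han⟩ := fun h => by
      have := σ.injective h
      rw [this] at hja
      exact lt_irrefl _ hja
    have hjlt : σ j < σ ⟨a, han⟩ := lt_of_le_of_ne hjle hjne
    apply hσ
    refine ⟨j, ⟨a, han⟩, ⟨b, hbn⟩, hja, (show a < b from haltb), hjlt, ?_⟩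
    show (σ ⟨a, han⟩ : ℕ) < (σ ⟨b, hbn⟩ : ℕ)
    rw [show ((σ ⟨a, han⟩ : Fin n) : ℕ) = pval σ a from by rw [pval, dif_pos han],
      show ((σ ⟨b, hbn⟩ : Fin n) : ℕ) = pval σ b from by rw [pval, dif_pos hbn]]
    exact hltv
  · exact pairwise_Cl n (codeF σ)

theorem pval_eq_decF {n : ℕ} {σ : Equiv.Perm (Fin n)} (hσ : Avoids123 σ) {i : ℕ}
    (hi : i < n) : pval σ i = decF n (codeF σ) i := by
  rcases Nat.eq_zero_or_pos (codeF σ i) with hc | hc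
  · rw [decF, if_neg (by omega)]
    obtain ⟨h1, h2⟩ := getD_filter_range (fun j => decide (codeF σ j = 0)) n i hi
      (by simpa using hc)
    rw [← nonmin_map_eq_Cl hσ]
    rw [show rank (codeF σ) i
      = ((List.range i).filter fun j => decide (codeF σ j = 0)).length from rfl]
    rw [getD_map_nat _ _ h2, h1]
  · rw [decF, if_pos hc]
    exact pval_min_eq σ hi hc

theorem encode_zero (c : ℕ → ℕ) : encode 0 c = [] := rfl

end LamAux

theorem lamWord_bijOn' (n : ℕ) :
    Set.BijOn (lamWord (n := n)) {σ | Avoids123 σ}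
      {p : List Bool | IsDyckWord p ∧ p.count true = n} := by
  rcases Nat.eq_zero_or_pos n with rfl | hn
  · -- n = 0
    have hlam : ∀ σ : Equiv.Perm (Fin 0), lamWord σ = [] := fun σ => by
      rw [LamAux.lamWord_eq_encode, LamAux.encode_zero]
    refine ⟨?_, ?_, ?_⟩
    · intro σ _
      rw [Set.mem_setOf_eq, hlam σ]
      refine ⟨⟨?_, rfl⟩, rfl⟩
      intro t ht
      rw [List.prefix_nil.mp ht]
      exact le_refl _
    · intro σ _ τ _ _
      exact Equiv.ext fun i => i.elim0
    · intro p hp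
      rw [Set.mem_setOf_eq] at hp
      obtain ⟨hd, hc⟩ := hp
      have hcf : p.count false = 0 := by rw [← hd.2, hc]
      have hlen : p.length = 0 := by
        have := LamAux.count_bool p
        omega
      have hpnil : p = [] := List.length_eq_zero_iff.mp hlen
      refine ⟨1, ?_, ?_⟩
      · rintro ⟨i, _, _, _⟩
        exact i.elim0
      · rw [hlam 1, hpnil]
  · refine ⟨?_, ?_, ?_⟩
    · intro σ hσ
      rw [Set.mem_setOf_eq, LamAux.lamWord_eq_encode]
      exact LamAux.encode_isDyck (LamAux.valid_codeF σ hn)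
    · intro σ hσ τ hτ heq
      rw [Set.mem_setOf_eq] at hσ hτ
      rw [LamAux.lamWord_eq_encode, LamAux.lamWord_eq_encode] at heq
      have hcode : LamAux.codeF σ = LamAux.codeF τ := by
        funext i
        by_cases hi : i < n
        · exact LamAux.encode_inj hn heq i hi
        · rw [LamAux.codeF, LamAux.codeF, dif_neg hi, dif_neg hi]
      apply Equiv.ext
      intro i
      apply Fin.ext
      have e1 : ((σ i : Fin n) : ℕ) = LamAux.pval σ i.val := by
        rw [LamAux.pval, dif_pos i.isLt, Fin.eta]
      have e2 : ((τ i : Fin n) : ℕ) = LamAux.pval τ i.val := by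
        rw [LamAux.pval, dif_pos i.isLt, Fin.eta]
      rw [e1, e2, LamAux.pval_eq_decF hσ i.isLt, LamAux.pval_eq_decF hτ i.isLt, hcode]
    · intro p hp
      rw [Set.mem_setOf_eq] at hp
      obtain ⟨hd, hc⟩ := hp
      obtain ⟨c, hv, henc⟩ := LamAux.dyck_decomp hn hd hc
      refine ⟨LamAux.decPerm hv, LamAux.decPerm_avoids hv, ?_⟩
      rw [LamAux.lamWord_eq_encode, LamAux.codeF_decPerm hv, henc]

/-- The map λ is a bijection between 123-avoiding permutations of length n and Dyck
paths of semilength n. -/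
theorem lamWord_bijOn (n : ℕ) :
    Set.BijOn (lamWord (n := n)) {σ | Avoids123 σ}
      {p : List Bool | IsDyckWord p ∧ p.count true = n} := by
  exact lamWord_bijOn' n
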